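/- Let θ : (Fin d → ℝ) → ℝ be nonnegative and measurable with the set {x | θ x > 0} of positive Lebesgue measure, and let Σ : Matrix ι ι ℝ. Define the dual functional J(Λ) := (∑ i, ∑ j, Λ i j * Σ i j) − ∫ θ(x) * Real.log (G(x)ᵀ Λ G(x)) dx. Let Λ₁ ≠ Λ₂ be class-constant symmetric positive-definite matrices such that x ↦ θ(x) * Real.log (G(x)ᵀ Λ G(x)) is Lebesgue integrable for each Λ ∈ {Λ₁, Λ₂, (Λ₁ + Λ₂)/2}. Then J((Λ₁ + Λ₂)/2) < (J(Λ₁) + J(Λ₂))/2; that is, the dual functional J_θ is strictly convex (Lemma 4.5 of the paper, in midpoint form). -/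

import Mathlib

open MeasureTheory

/-- The monomial vector `G(x) = G(x₁) ⊗ ⋯ ⊗ G(x_d)`. -/
noncomputable def Gvec (n d : ℕ) (x : Fin d → ℝ) (i : Fin d → Fin (n + 1)) : ℝ :=
  ∏ t, x t ^ (i t : ℕ)

/-- The quadratic form `q(x, Λ) = G(x)ᵀ Λ G(x)`. -/
noncomputable def quadForm (n d : ℕ)
    (Λ : Matrix (Fin d → Fin (n + 1)) (Fin d → Fin (n + 1)) ℝ)
    (x : Fin d → ℝ) : ℝ :=
  ∑ i, ∑ j, Gvec n d x i * Λ i j * Gvec n d x j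

/-- Class-constant matrices (the paper's parametrization (21)). -/
def ClassConstant (n d : ℕ)
    (Λ : Matrix (Fin d → Fin (n + 1)) (Fin d → Fin (n + 1)) ℝ) : Prop :=
  ∀ i j i' j' : Fin d → Fin (n + 1),
    (∀ t, (i t : ℕ) + (j t : ℕ) = (i' t : ℕ) + (j' t : ℕ)) → Λ i j = Λ i' j'

/-- The zero set of a nonzero multivariate polynomial is Lebesgue-null. -/
theorem mvpoly_zero_null : ∀ (d : ℕ) (p : MvPolynomial (Fin d) ℝ), p ≠ 0 →
    volume {x : Fin d → ℝ | MvPolynomial.eval x p = 0} = 0 := by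
  intro d
  induction d with
  | zero =>
    intro p hp
    have : {x : Fin 0 → ℝ | MvPolynomial.eval x p = 0} = ∅ := by
      ext x
      simp only [Set.mem_setOf_eq, Set.mem_empty_iff_false, iff_false]
      rw [MvPolynomial.eq_C_of_isEmpty p] at hp ⊢
      simp only [MvPolynomial.eval_C]
      exact fun h => hp (by rw [h, map_zero])
    simp [this]
  | succ d ih =>
    intro p hp
    set Q := MvPolynomial.finSuccEquiv ℝ d p with hQdef
    have hQ : Q ≠ 0 := by
      intro h
      exact hp ((MvPolynomial.finSuccEquiv ℝ d).injective (by simp [← hQdef, h]))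
    have hc : Q.leadingCoeff ≠ 0 := Polynomial.leadingCoeff_ne_zero.mpr hQ
    have hae : ∀ᵐ y : Fin d → ℝ, MvPolynomial.eval y Q.leadingCoeff ≠ 0 := by
      have := ih Q.leadingCoeff hc
      rw [ae_iff]
      simpa using this
    set T : Set ((Fin d → ℝ) × ℝ) :=
      {w | MvPolynomial.eval (Fin.cons w.2 w.1) p = 0} with hTdef
    have hconsc : Continuous fun w : (Fin d → ℝ) × ℝ => (Fin.cons w.2 w.1 : Fin (d+1) → ℝ) := by
      refine continuous_pi fun j => ?_
      refine Fin.cases ?_ (fun i => ?_) j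
      · simpa using continuous_snd
      · simpa [Function.comp_def] using (continuous_apply i).comp continuous_fst
    have hTm : MeasurableSet T := by
      have : Continuous fun w : (Fin d → ℝ) × ℝ =>
          MvPolynomial.eval (Fin.cons w.2 w.1 : Fin (d+1) → ℝ) p :=
        (MvPolynomial.continuous_eval p).comp hconsc
      exact this.measurable (measurableSet_singleton (0:ℝ))
    have hTnull : (volume : Measure ((Fin d → ℝ) × ℝ)) T = 0 := by
      rw [show (volume : Measure ((Fin d → ℝ) × ℝ)) =
        (volume : Measure (Fin d → ℝ)).prod (volume : Measure ℝ) from rfl]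
      rw [MeasureTheory.Measure.measure_prod_null hTm]
      filter_upwards [hae] with y hy
      have hset : Prod.mk y ⁻¹' T = {a : ℝ | (Q.map (MvPolynomial.eval y)).eval a = 0} := by
        ext a
        simp only [hTdef, Set.mem_preimage, Set.mem_setOf_eq]
        rw [MvPolynomial.eval_eq_eval_mv_eval']
      have hqy : Q.map (MvPolynomial.eval y) ≠ 0 := by
        intro h
        apply hy
        have h2 : MvPolynomial.eval y (Q.coeff Q.natDegree) = 0 := by
          rw [← Polynomial.coeff_map, h, Polynomial.coeff_zero]
        rw [Polynomial.leadingCoeff]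
        exact h2
      rw [hset]
      exact Set.Finite.measure_zero (Polynomial.finite_setOf_isRoot hqy) _
    -- transfer via the measurable equivalence
    have hmp := volume_preserving_piFinSuccAbove (fun _ : Fin (d+1) => ℝ) 0
    set e := MeasurableEquiv.piFinSuccAbove (fun _ : Fin (d+1) => ℝ) 0 with hedef
    have hZ : {x : Fin (d+1) → ℝ | MvPolynomial.eval x p = 0} = e ⁻¹' (Prod.swap ⁻¹' T) := by
      ext x
      simp only [Set.mem_preimage, Set.mem_setOf_eq, hTdef, hedef,
        MeasurableEquiv.piFinSuccAbove_apply, Prod.swap, Fin.insertNthEquiv_zero,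
        Fin.consEquiv, Equiv.coe_fn_symm_mk]
      rw [show (Fin.cons (x 0) (Fin.tail x) : Fin (d+1) → ℝ) = x from Fin.cons_self_tail x]
    have hswap := (MeasureTheory.Measure.measurePreserving_swap (μ := (volume : Measure ℝ))
      (ν := (volume : Measure (Fin d → ℝ)))).measure_preimage hTm.nullMeasurableSet
    rw [hZ, hmp.measure_preimage ((hTm.preimage measurable_swap).nullMeasurableSet)]
    show (volume : Measure ℝ).prod (volume : Measure (Fin d → ℝ)) (Prod.swap ⁻¹' T) = 0
    rw [hswap]
    exact hTnull

/-- The multivariate polynomial whose evaluation is `quadForm`. -/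
noncomputable def qpoly (n d : ℕ)
    (Λ : Matrix (Fin d → Fin (n + 1)) (Fin d → Fin (n + 1)) ℝ) :
    MvPolynomial (Fin d) ℝ :=
  ∑ i, ∑ j, MvPolynomial.monomial
    (Finsupp.equivFunOnFinite.symm (fun t => (i t : ℕ) + (j t : ℕ))) (Λ i j)

theorem qpoly_eval (n d : ℕ) (Λ : Matrix (Fin d → Fin (n + 1)) (Fin d → Fin (n + 1)) ℝ)
    (x : Fin d → ℝ) : MvPolynomial.eval x (qpoly n d Λ) = quadForm n d Λ x := by
  unfold qpoly quadForm Gvec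
  rw [map_sum]
  refine Finset.sum_congr rfl fun i _ => ?_
  rw [map_sum]
  refine Finset.sum_congr rfl fun j _ => ?_
  rw [MvPolynomial.eval_monomial, Finsupp.prod_pow]
  simp only [Finsupp.coe_equivFunOnFinite_symm]
  rw [show (∏ t, x t ^ ((i t : ℕ) + (j t : ℕ))) = (∏ t, x t ^ (i t : ℕ)) * ∏ t, x t ^ (j t : ℕ) by
    rw [← Finset.prod_mul_distrib]; exact Finset.prod_congr rfl fun t _ => pow_add _ _ _]
  ring

theorem qpoly_coeff (n d : ℕ) (Λ : Matrix (Fin d → Fin (n + 1)) (Fin d → Fin (n + 1)) ℝ)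
    (hcc : ClassConstant n d Λ) (i₀ j₀ : Fin d → Fin (n + 1)) :
    MvPolynomial.coeff (Finsupp.equivFunOnFinite.symm
        (fun t => (i₀ t : ℕ) + (j₀ t : ℕ))) (qpoly n d Λ)
      = (∑ i : Fin d → Fin (n+1), ∑ j : Fin d → Fin (n+1),
          if (∀ t, (i t : ℕ) + (j t : ℕ) = (i₀ t : ℕ) + (j₀ t : ℕ)) then (1:ℝ) else 0)
        * Λ i₀ j₀ := by
  classical
  unfold qpoly
  rw [MvPolynomial.coeff_sum, Finset.sum_mul]
  refine Finset.sum_congr rfl fun i _ => ?_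
  rw [MvPolynomial.coeff_sum, Finset.sum_mul]
  refine Finset.sum_congr rfl fun j _ => ?_
  rw [MvPolynomial.coeff_monomial]
  have hiff : (Finsupp.equivFunOnFinite.symm (fun t => (i t : ℕ) + (j t : ℕ))
      = Finsupp.equivFunOnFinite.symm (fun t => (i₀ t : ℕ) + (j₀ t : ℕ)))
      ↔ (∀ t, (i t : ℕ) + (j t : ℕ) = (i₀ t : ℕ) + (j₀ t : ℕ)) := by
    rw [Finsupp.equivFunOnFinite.symm.injective.eq_iff, funext_iff]
  by_cases h : ∀ t, (i t : ℕ) + (j t : ℕ) = (i₀ t : ℕ) + (j₀ t : ℕ)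
  · rw [if_pos (hiff.mpr h), if_pos h, one_mul]
    exact hcc i j i₀ j₀ h
  · rw [if_neg (fun hh => h (hiff.mp hh)), if_neg h, zero_mul]

theorem dual_functional_strictly_convex (n d : ℕ) (hd : 1 ≤ d)
    (θ : (Fin d → ℝ) → ℝ) (hθ0 : ∀ x, 0 ≤ θ x) (hθm : Measurable θ)
    (hθpos : 0 < volume {x : Fin d → ℝ | 0 < θ x})
    (S : Matrix (Fin d → Fin (n + 1)) (Fin d → Fin (n + 1)) ℝ)
    (J : Matrix (Fin d → Fin (n + 1)) (Fin d → Fin (n + 1)) ℝ → ℝ)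
    (hJ : ∀ Λ, J Λ = (∑ i, ∑ j, Λ i j * S i j)
      - ∫ x : Fin d → ℝ, θ x * Real.log (quadForm n d Λ x))
    (Λ₁ Λ₂ : Matrix (Fin d → Fin (n + 1)) (Fin d → Fin (n + 1)) ℝ)
    (hne : Λ₁ ≠ Λ₂)
    (hcc₁ : ClassConstant n d Λ₁) (hcc₂ : ClassConstant n d Λ₂)
    (hsym₁ : Λ₁.transpose = Λ₁) (hsym₂ : Λ₂.transpose = Λ₂)
    (hpd₁ : ∀ v : (Fin d → Fin (n + 1)) → ℝ, v ≠ 0 →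
      0 < ∑ i, ∑ j, v i * Λ₁ i j * v j)
    (hpd₂ : ∀ v : (Fin d → Fin (n + 1)) → ℝ, v ≠ 0 →
      0 < ∑ i, ∑ j, v i * Λ₂ i j * v j)
    (hint₁ : Integrable (fun x : Fin d → ℝ => θ x * Real.log (quadForm n d Λ₁ x)))
    (hint₂ : Integrable (fun x : Fin d → ℝ => θ x * Real.log (quadForm n d Λ₂ x)))
    (hintm : Integrable (fun x : Fin d → ℝ =>
      θ x * Real.log (quadForm n d ((1 / 2 : ℝ) • (Λ₁ + Λ₂)) x))) :
    J ((1 / 2 : ℝ) • (Λ₁ + Λ₂)) < (J Λ₁ + J Λ₂) / 2 := by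
  classical
  set M := (1 / 2 : ℝ) • (Λ₁ + Λ₂) with hMdef
  -- G(x) is never zero
  have hGne : ∀ x : Fin d → ℝ, Gvec n d x ≠ 0 := by
    intro x h
    have := congrFun h (fun _ => 0)
    simp [Gvec] at this
  have hq1 : ∀ x, 0 < quadForm n d Λ₁ x := fun x => hpd₁ (Gvec n d x) (hGne x)
  have hq2 : ∀ x, 0 < quadForm n d Λ₂ x := fun x => hpd₂ (Gvec n d x) (hGne x)
  -- midpoint quad form
  have hqm : ∀ x, quadForm n d M x = (quadForm n d Λ₁ x + quadForm n d Λ₂ x) / 2 := by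
    intro x
    unfold quadForm
    rw [eq_div_iff (by norm_num : (2:ℝ) ≠ 0), Finset.sum_mul, ← Finset.sum_add_distrib]
    refine Finset.sum_congr rfl fun i _ => ?_
    rw [Finset.sum_mul, ← Finset.sum_add_distrib]
    refine Finset.sum_congr rfl fun j _ => ?_
    simp only [hMdef, Matrix.smul_apply, Matrix.add_apply, smul_eq_mul]
    ring
  -- trace is linear
  have hT : (∑ i, ∑ j, M i j * S i j)
      = ((∑ i, ∑ j, Λ₁ i j * S i j) + (∑ i, ∑ j, Λ₂ i j * S i j)) / 2 := by
    rw [eq_div_iff (by norm_num : (2:ℝ) ≠ 0), Finset.sum_mul, ← Finset.sum_add_distrib]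
    refine Finset.sum_congr rfl fun i _ => ?_
    rw [Finset.sum_mul, ← Finset.sum_add_distrib]
    refine Finset.sum_congr rfl fun j _ => ?_
    simp only [hMdef, Matrix.smul_apply, Matrix.add_apply, smul_eq_mul]
    ring
  -- the nonnegative integrand
  set h : (Fin d → ℝ) → ℝ := fun x => θ x * Real.log (quadForm n d M x)
    - (θ x * Real.log (quadForm n d Λ₁ x) + θ x * Real.log (quadForm n d Λ₂ x)) / 2
    with hhdef
  have hlog : ∀ x, (Real.log (quadForm n d Λ₁ x) + Real.log (quadForm n d Λ₂ x)) / 2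
      ≤ Real.log (quadForm n d M x) := by
    intro x
    rw [hqm x]
    have hcon := (strictConcaveOn_log_Ioi.concaveOn).2 (Set.mem_Ioi.mpr (hq1 x))
      (Set.mem_Ioi.mpr (hq2 x)) (by norm_num : (0:ℝ) ≤ 1/2) (by norm_num : (0:ℝ) ≤ 1/2)
      (by norm_num : (1/2 : ℝ) + 1/2 = 1)
    rw [smul_eq_mul, smul_eq_mul, smul_eq_mul, smul_eq_mul] at hcon
    calc (Real.log (quadForm n d Λ₁ x) + Real.log (quadForm n d Λ₂ x)) / 2
        = 1/2 * Real.log (quadForm n d Λ₁ x) + 1/2 * Real.log (quadForm n d Λ₂ x) := by ring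
      _ ≤ Real.log (1/2 * quadForm n d Λ₁ x + 1/2 * quadForm n d Λ₂ x) := hcon
      _ = Real.log ((quadForm n d Λ₁ x + quadForm n d Λ₂ x) / 2) := by ring_nf
  have hnn : ∀ x, 0 ≤ h x := by
    intro x
    have : θ x * ((Real.log (quadForm n d Λ₁ x) + Real.log (quadForm n d Λ₂ x)) / 2)
        ≤ θ x * Real.log (quadForm n d M x) := mul_le_mul_of_nonneg_left (hlog x) (hθ0 x)
    simp only [hhdef]
    nlinarith [this]
  have hstrict : ∀ x, 0 < θ x → quadForm n d Λ₁ x ≠ quadForm n d Λ₂ x → 0 < h x := by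
    intro x hθx hqx
    have hcon := strictConcaveOn_log_Ioi.2 (Set.mem_Ioi.mpr (hq1 x))
      (Set.mem_Ioi.mpr (hq2 x)) hqx (by norm_num : (0:ℝ) < 1/2) (by norm_num : (0:ℝ) < 1/2)
      (by norm_num : (1/2 : ℝ) + 1/2 = 1)
    rw [smul_eq_mul, smul_eq_mul, smul_eq_mul, smul_eq_mul] at hcon
    have hlt : (Real.log (quadForm n d Λ₁ x) + Real.log (quadForm n d Λ₂ x)) / 2
        < Real.log (quadForm n d M x) := by
      rw [hqm x]
      calc (Real.log (quadForm n d Λ₁ x) + Real.log (quadForm n d Λ₂ x)) / 2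
          = 1/2 * Real.log (quadForm n d Λ₁ x) + 1/2 * Real.log (quadForm n d Λ₂ x) := by ring
        _ < Real.log (1/2 * quadForm n d Λ₁ x + 1/2 * quadForm n d Λ₂ x) := hcon
        _ = Real.log ((quadForm n d Λ₁ x + quadForm n d Λ₂ x) / 2) := by ring_nf
    have := mul_lt_mul_of_pos_left hlt hθx
    simp only [hhdef]
    nlinarith [this]
  -- the coincidence set is null
  have hpoly_ne : qpoly n d Λ₁ - qpoly n d Λ₂ ≠ 0 := by
    obtain ⟨i₀, j₀, hij⟩ : ∃ i₀ j₀, Λ₁ i₀ j₀ ≠ Λ₂ i₀ j₀ := by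
      by_contra hcon
      push_neg at hcon
      exact hne (funext fun i => funext fun j => hcon i j)
    intro hzero
    have heq : qpoly n d Λ₁ = qpoly n d Λ₂ := sub_eq_zero.mp hzero
    have hc := congrArg (MvPolynomial.coeff (Finsupp.equivFunOnFinite.symm
      (fun t => (i₀ t : ℕ) + (j₀ t : ℕ)))) heq
    rw [qpoly_coeff n d Λ₁ hcc₁ i₀ j₀, qpoly_coeff n d Λ₂ hcc₂ i₀ j₀] at hc
    set N : ℝ := ∑ i : Fin d → Fin (n+1), ∑ j : Fin d → Fin (n+1),
      if (∀ t, (i t : ℕ) + (j t : ℕ) = (i₀ t : ℕ) + (j₀ t : ℕ)) then (1:ℝ) else 0 with hNdef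
    have hN : 0 < N := by
      have hterm : (1:ℝ) ≤ ∑ j : Fin d → Fin (n+1),
          if (∀ t, (i₀ t : ℕ) + (j t : ℕ) = (i₀ t : ℕ) + (j₀ t : ℕ)) then (1:ℝ) else 0 := by
        have := Finset.single_le_sum (f := fun j : Fin d → Fin (n+1) =>
          if (∀ t, (i₀ t : ℕ) + (j t : ℕ) = (i₀ t : ℕ) + (j₀ t : ℕ)) then (1:ℝ) else 0)
          (fun j _ => by positivity) (Finset.mem_univ j₀)
        simpa using this
      have houter := Finset.single_le_sum (f := fun i : Fin d → Fin (n+1) =>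
        ∑ j : Fin d → Fin (n+1),
          if (∀ t, (i t : ℕ) + (j t : ℕ) = (i₀ t : ℕ) + (j₀ t : ℕ)) then (1:ℝ) else 0)
        (fun i _ => Finset.sum_nonneg fun j _ => by positivity) (Finset.mem_univ i₀)
      rw [hNdef]
      linarith
    exact hij (mul_left_cancel₀ (ne_of_gt hN) (by linarith [hc] : N * Λ₁ i₀ j₀ = N * Λ₂ i₀ j₀))
  have hnull : volume {x : Fin d → ℝ | quadForm n d Λ₁ x = quadForm n d Λ₂ x} = 0 := by
    have hset : {x : Fin d → ℝ | quadForm n d Λ₁ x = quadForm n d Λ₂ x}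
        = {x : Fin d → ℝ | MvPolynomial.eval x (qpoly n d Λ₁ - qpoly n d Λ₂) = 0} := by
      ext x
      simp only [Set.mem_setOf_eq, map_sub, sub_eq_zero, qpoly_eval]
    rw [hset]
    exact mvpoly_zero_null d _ hpoly_ne
  -- the good set has positive measure
  set E : Set (Fin d → ℝ) := {x | 0 < θ x ∧ quadForm n d Λ₁ x ≠ quadForm n d Λ₂ x} with hEdef
  have hE : 0 < volume E := by
    by_contra h0
    push_neg at h0
    have hE0 : volume E = 0 := le_antisymm h0 zero_le
    have hsub : {x : Fin d → ℝ | 0 < θ x}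
        ⊆ E ∪ {x : Fin d → ℝ | quadForm n d Λ₁ x = quadForm n d Λ₂ x} := by
      intro x hx
      by_cases hqx : quadForm n d Λ₁ x = quadForm n d Λ₂ x
      · exact Or.inr hqx
      · exact Or.inl ⟨hx, hqx⟩
    have := (measure_mono (μ := (volume : Measure (Fin d → ℝ))) hsub).trans (measure_union_le _ _)
    rw [hE0, hnull] at this
    simp at this
    exact absurd this (ne_of_gt hθpos)
  -- integrate
  have hs2 : Integrable (fun x : Fin d → ℝ =>
      (θ x * Real.log (quadForm n d Λ₁ x) + θ x * Real.log (quadForm n d Λ₂ x)) / 2) :=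
    (hint₁.add hint₂).div_const 2
  have hinth : Integrable h := hintm.sub hs2
  have hpos : 0 < ∫ x, h x := by
    rw [integral_pos_iff_support_of_nonneg hnn hinth]
    refine lt_of_lt_of_le hE (measure_mono ?_)
    intro x hx
    exact ne_of_gt (hstrict x hx.1 hx.2)
  have hIeq : ∫ x, h x = (∫ x, θ x * Real.log (quadForm n d M x))
      - ((∫ x, θ x * Real.log (quadForm n d Λ₁ x))
        + (∫ x, θ x * Real.log (quadForm n d Λ₂ x))) / 2 := by
    rw [hhdef]
    rw [integral_sub hintm hs2]
    congr 1
    rw [integral_div, integral_add hint₁ hint₂]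
  rw [hJ, hJ, hJ, hT]
  rw [hIeq] at hpos
  linarith
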